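/- If λ_q > 0 and V_0, …, V_{q−1} is an α-realizable q-partition of G, then ‖Ŭ Ŭᵀ − Ū Ūᵀ‖_F² ≤ 2α², where Ŭ = [u_0 ⋯ u_{q−1}], Ū = [ū_0 ⋯ ū_{q−1}], and ‖·‖_F is the Frobenius norm. -/

import Mathlib

open Matrix

/-- The weighted degree matrix of `A`. -/
noncomputable def degMat {n : ℕ} (A : Matrix (Fin n) (Fin n) ℝ) :
    Matrix (Fin n) (Fin n) ℝ :=
  Matrix.diagonal (fun k => ∑ l, A k l)

/-- The graph Laplacian `L = D - A`. -/
noncomputable def lap {n : ℕ} (A : Matrix (Fin n) (Fin n) ℝ) :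
    Matrix (Fin n) (Fin n) ℝ :=
  degMat A - A

/-- The unit vector that is uniform (`1/√|V j|`) on part `V j` and `0` elsewhere. -/
noncomputable def ubar {n q : ℕ} (V : Fin q → Finset (Fin n)) (j : Fin q) :
    Fin n → ℝ :=
  fun i => if i ∈ V j then (Real.sqrt ((V j).card))⁻¹ else 0

/-- The relative outgoing weight of the part `V j`. -/
noncomputable def relout {n q : ℕ} (A : Matrix (Fin n) (Fin n) ℝ)
    (V : Fin q → Finset (Fin n)) (j : Fin q) : ℝ :=
  (Real.sqrt ((V j).card))⁻¹ * ∑ k ∈ V j, ∑ l ∈ (V j)ᶜ, A k l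

/-- The average relative outgoing weight of a `q`-partition. -/
noncomputable def avgrelout {n q : ℕ} (A : Matrix (Fin n) (Fin n) ℝ)
    (V : Fin q → Finset (Fin n)) : ℝ :=
  Real.sqrt ((1 / (q : ℝ)) * ∑ j : Fin q, (relout A V j) ^ 2)

/- ### Auxiliary lemmas -/

lemma aux_expand_sum {n : ℕ} {ι κ : Type*} (s : Finset ι) (t : Finset κ)
    (f : ι → Fin n → ℝ) (g : κ → Fin n → ℝ) :
    ∑ a : Fin n, ∑ b : Fin n, (∑ i ∈ s, f i a * f i b) * (∑ j ∈ t, g j a * g j b)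
      = ∑ i ∈ s, ∑ j ∈ t, (∑ a : Fin n, f i a * g j a) ^ 2 := by
  calc ∑ a : Fin n, ∑ b : Fin n, (∑ i ∈ s, f i a * f i b) * (∑ j ∈ t, g j a * g j b)
      = ∑ a : Fin n, ∑ b : Fin n, ∑ i ∈ s, ∑ j ∈ t,
          (f i a * g j a) * (f i b * g j b) := by
        refine Finset.sum_congr rfl fun a _ => Finset.sum_congr rfl fun b _ => ?_
        rw [Finset.sum_mul_sum]
        exact Finset.sum_congr rfl fun i _ => Finset.sum_congr rfl fun j _ => by ring
    _ = ∑ a : Fin n, ∑ i ∈ s, ∑ b : Fin n, ∑ j ∈ t,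
          (f i a * g j a) * (f i b * g j b) :=
        Finset.sum_congr rfl fun a _ => Finset.sum_comm
    _ = ∑ a : Fin n, ∑ i ∈ s, ∑ j ∈ t, ∑ b : Fin n,
          (f i a * g j a) * (f i b * g j b) :=
        Finset.sum_congr rfl fun a _ => Finset.sum_congr rfl fun i _ => Finset.sum_comm
    _ = ∑ i ∈ s, ∑ a : Fin n, ∑ j ∈ t, ∑ b : Fin n,
          (f i a * g j a) * (f i b * g j b) := Finset.sum_comm
    _ = ∑ i ∈ s, ∑ j ∈ t, ∑ a : Fin n, ∑ b : Fin n,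
          (f i a * g j a) * (f i b * g j b) :=
        Finset.sum_congr rfl fun i _ => Finset.sum_comm
    _ = ∑ i ∈ s, ∑ j ∈ t, (∑ a : Fin n, f i a * g j a) ^ 2 := by
        refine Finset.sum_congr rfl fun i _ => Finset.sum_congr rfl fun j _ => ?_
        rw [sq, Finset.sum_mul_sum]

lemma aux_complete {n : ℕ} (u : Fin n → Fin n → ℝ)
    (horth : ∀ i j : Fin n, (∑ a, u i a * u j a) = if i = j then (1 : ℝ) else 0) :
    ∀ a b : Fin n, (∑ i, u i a * u i b) = if a = b then (1 : ℝ) else 0 := by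
  have h1 : (Matrix.of u) * (Matrix.of u)ᵀ = 1 := by
    ext i j
    simp [Matrix.mul_apply, Matrix.one_apply, horth i j]
  have h2 : (Matrix.of u)ᵀ * (Matrix.of u) = 1 := mul_eq_one_comm.mp h1
  intro a b
  have := congrFun (congrFun h2 a) b
  simpa [Matrix.mul_apply, Matrix.one_apply, mul_comm] using this

lemma aux_parseval {n : ℕ} (u : Fin n → Fin n → ℝ)
    (hcomp : ∀ a b : Fin n, (∑ i, u i a * u i b) = if a = b then (1 : ℝ) else 0)
    (x : Fin n → ℝ) :
    ∑ i, (∑ a, x a * u i a) ^ 2 = ∑ a, x a ^ 2 := by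
  calc ∑ i, (∑ a, x a * u i a) ^ 2
      = ∑ i : Fin n, ∑ a : Fin n, ∑ b : Fin n, (x a * x b) * (u i a * u i b) := by
        refine Finset.sum_congr rfl fun i _ => ?_
        rw [sq, Finset.sum_mul_sum]
        exact Finset.sum_congr rfl fun a _ => Finset.sum_congr rfl fun b _ => by ring
    _ = ∑ a : Fin n, ∑ i : Fin n, ∑ b : Fin n, (x a * x b) * (u i a * u i b) :=
        Finset.sum_comm
    _ = ∑ a : Fin n, ∑ b : Fin n, ∑ i : Fin n, (x a * x b) * (u i a * u i b) :=
        Finset.sum_congr rfl fun a _ => Finset.sum_comm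
    _ = ∑ a : Fin n, ∑ b : Fin n, (x a * x b) * (if a = b then (1:ℝ) else 0) := by
        refine Finset.sum_congr rfl fun a _ => Finset.sum_congr rfl fun b _ => ?_
        rw [← Finset.mul_sum, hcomp a b]
    _ = ∑ a, x a ^ 2 := by
        refine Finset.sum_congr rfl fun a _ => ?_
        simp [sq]

lemma aux_filter_card {n q : ℕ} (hqn : q < n) :
    (Finset.univ.filter (fun l : Fin n => (l : ℕ) < q)).card = q := by
  have h : Finset.univ.filter (fun l : Fin n => (l : ℕ) < q)
      = Finset.map (Fin.castLEEmb hqn.le) Finset.univ := by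
    ext x
    simp only [Finset.mem_filter, Finset.mem_univ, true_and, Finset.mem_map,
      Fin.castLEEmb, Function.Embedding.coeFn_mk]
    constructor
    · intro hx
      exact ⟨⟨x.1, hx⟩, by simp [Fin.castLE, Fin.ext_iff]⟩
    · rintro ⟨y, rfl⟩
      simp [Fin.castLE]
  rw [h, Finset.card_map, Finset.card_univ, Fintype.card_fin]

lemma aux_ubar_orth {n q : ℕ} (V : Fin q → Finset (Fin n)) (hne : ∀ j, (V j).Nonempty)
    (hdisj : ∀ j j' : Fin q, j ≠ j' → Disjoint (V j) (V j')) (j j' : Fin q) :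
    (∑ a, ubar V j a * ubar V j' a) = if j = j' then (1:ℝ) else 0 := by
  by_cases h : j = j'
  · subst h
    simp only [if_pos rfl, ubar, ite_mul, zero_mul, mul_ite, mul_zero]
    rw [Finset.sum_ite_mem, Finset.univ_inter,
      Finset.sum_congr rfl (fun a ha => if_pos ha), Finset.sum_const, nsmul_eq_mul, if_pos trivial]
    have hc : (0:ℝ) < ((V j).card : ℝ) := by
      exact_mod_cast Finset.card_pos.mpr (hne j)
    rw [← mul_inv, Real.mul_self_sqrt hc.le]
    field_simp
  · rw [if_neg h]
    refine Finset.sum_eq_zero fun a _ => ?_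
    by_cases ha : a ∈ V j
    · have : a ∉ V j' := Finset.disjoint_left.mp (hdisj j j' h) ha
      simp [ubar, this]
    · simp [ubar, ha]

lemma aux_lapsymm {n : ℕ} (A : Matrix (Fin n) (Fin n) ℝ)
    (hsymm : ∀ k l, A k l = A l k) (k l : Fin n) : lap A k l = lap A l k := by
  unfold lap degMat
  by_cases h : k = l
  · subst h; rfl
  · simp [Matrix.sub_apply, Matrix.diagonal_apply, h, Ne.symm h, hsymm k l]

lemma aux_lapadj {n : ℕ} (A : Matrix (Fin n) (Fin n) ℝ)
    (hsymm : ∀ k l, A k l = A l k) (x y : Fin n → ℝ) :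
    ∑ a, (lap A).mulVec x a * y a = ∑ a, x a * (lap A).mulVec y a := by
  simp only [Matrix.mulVec, dotProduct]
  calc ∑ a, (∑ b, lap A a b * x b) * y a
      = ∑ a, ∑ b, lap A a b * x b * y a := by
        exact Finset.sum_congr rfl fun a _ => Finset.sum_mul _ _ _
    _ = ∑ b, ∑ a, lap A a b * x b * y a := Finset.sum_comm
    _ = ∑ b, x b * ∑ a, lap A b a * y a := by
        refine Finset.sum_congr rfl fun b _ => ?_
        rw [Finset.mul_sum]
        exact Finset.sum_congr rfl fun a _ => by rw [aux_lapsymm A hsymm a b]; ring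

lemma aux_lap_ubar {n q : ℕ} (A : Matrix (Fin n) (Fin n) ℝ)
    (V : Fin q → Finset (Fin n)) (j : Fin q) (k : Fin n) :
    (lap A).mulVec (ubar V j) k =
      if k ∈ V j then (Real.sqrt ((V j).card))⁻¹ * ∑ l ∈ (V j)ᶜ, A k l
      else -((Real.sqrt ((V j).card))⁻¹ * ∑ l ∈ V j, A k l) := by
  set r := (Real.sqrt ((V j).card))⁻¹ with hr
  have h1 : (lap A).mulVec (ubar V j) k
      = (∑ l, A k l) * ubar V j k - r * ∑ l ∈ V j, A k l := by
    simp only [Matrix.mulVec, dotProduct, lap, degMat, Matrix.sub_apply]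
    rw [show ∀ (f g : Fin n → ℝ), (∑ l, (f l - g l) * ubar V j l)
        = ∑ l, f l * ubar V j l - ∑ l, g l * ubar V j l from
      fun f g => by rw [← Finset.sum_sub_distrib]; exact Finset.sum_congr rfl fun l _ => by ring]
    congr 1
    · rw [Finset.sum_congr rfl (fun l _ => ?_), Finset.sum_ite_eq Finset.univ k
        (fun l => (∑ m, A k m) * ubar V j l)]
      · simp
      · rw [Matrix.diagonal_apply]
        by_cases h : k = l <;> simp [h]
    · simp only [ubar, mul_ite, mul_zero]
      rw [Finset.sum_ite_mem, Finset.univ_inter, ← Finset.sum_mul]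
      ring
  have h2 : ∑ l, A k l = ∑ l ∈ V j, A k l + ∑ l ∈ (V j)ᶜ, A k l :=
    (Finset.sum_add_sum_compl (V j) _).symm
  rw [h1]
  by_cases h : k ∈ V j
  · rw [if_pos h]
    simp only [ubar, if_pos h, ← hr]
    rw [h2]; ring
  · rw [if_neg h]
    simp only [ubar, if_neg h, ← hr]
    ring

lemma aux_lap_ubar_norm {n q : ℕ} (A : Matrix (Fin n) (Fin n) ℝ)
    (hsymm : ∀ k l, A k l = A l k) (hnonneg : ∀ k l, 0 ≤ A k l)
    (V : Fin q → Finset (Fin n)) (j : Fin q) :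
    ∑ a, ((lap A).mulVec (ubar V j) a) ^ 2 ≤ 2 * relout A V j ^ 2 := by
  set r := (Real.sqrt ((V j).card))⁻¹ with hr
  have hr0 : 0 ≤ r := by positivity
  have hcut : ∑ k ∈ (V j)ᶜ, ∑ l ∈ V j, A k l = ∑ k ∈ V j, ∑ l ∈ (V j)ᶜ, A k l := by
    refine Finset.sum_comm.trans ?_
    exact Finset.sum_congr rfl fun k _ => Finset.sum_congr rfl fun l _ => hsymm l k
  rw [← Finset.sum_add_sum_compl (V j)]
  have e1 : ∑ a ∈ V j, ((lap A).mulVec (ubar V j) a) ^ 2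
      = r ^ 2 * ∑ a ∈ V j, (∑ l ∈ (V j)ᶜ, A a l) ^ 2 := by
    rw [Finset.mul_sum]
    refine Finset.sum_congr rfl fun a ha => ?_
    rw [aux_lap_ubar A V j a, if_pos ha, ← hr, mul_pow]
  have e2 : ∑ a ∈ (V j)ᶜ, ((lap A).mulVec (ubar V j) a) ^ 2
      = r ^ 2 * ∑ a ∈ (V j)ᶜ, (∑ l ∈ V j, A a l) ^ 2 := by
    rw [Finset.mul_sum]
    refine Finset.sum_congr rfl fun a ha => ?_
    rw [aux_lap_ubar A V j a, if_neg (Finset.mem_compl.mp ha), ← hr, neg_pow, mul_pow]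
    ring
  have b1 : ∑ a ∈ V j, (∑ l ∈ (V j)ᶜ, A a l) ^ 2
      ≤ (∑ a ∈ V j, ∑ l ∈ (V j)ᶜ, A a l) ^ 2 :=
    Finset.sum_sq_le_sq_sum_of_nonneg fun a _ =>
      Finset.sum_nonneg fun l _ => hnonneg a l
  have b2 : ∑ a ∈ (V j)ᶜ, (∑ l ∈ V j, A a l) ^ 2
      ≤ (∑ a ∈ V j, ∑ l ∈ (V j)ᶜ, A a l) ^ 2 := by
    calc ∑ a ∈ (V j)ᶜ, (∑ l ∈ V j, A a l) ^ 2
        ≤ (∑ a ∈ (V j)ᶜ, ∑ l ∈ V j, A a l) ^ 2 :=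
          Finset.sum_sq_le_sq_sum_of_nonneg fun a _ =>
            Finset.sum_nonneg fun l _ => hnonneg a l
      _ = _ := by rw [hcut]
  have hrel : relout A V j ^ 2 = r ^ 2 * (∑ a ∈ V j, ∑ l ∈ (V j)ᶜ, A a l) ^ 2 := by
    rw [relout, mul_pow]
  rw [e1, e2]
  nlinarith [sq_nonneg r]

/-- if `λ_q > 0` and the partition is α-realizable, then
`‖Ŭ Ŭᵀ − Ū Ūᵀ‖_F² ≤ 2α²`. -/
theorem stmt_6 (n q : ℕ) (hq1 : 1 ≤ q) (hqn : q < n)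
    (A : Matrix (Fin n) (Fin n) ℝ)
    (hsymm : ∀ k l, A k l = A l k)
    (hnonneg : ∀ k l, 0 ≤ A k l)
    (hdiag : ∀ k, A k k = 0)
    (lam : Fin n → ℝ)
    (hmono : Monotone lam)
    (hlam0 : lam ⟨0, Nat.lt_of_le_of_lt (Nat.zero_le q) hqn⟩ = 0)
    (u : Fin n → Fin n → ℝ)
    (horth : ∀ i j : Fin n, (∑ a, u i a * u j a) = if i = j then (1 : ℝ) else 0)
    (heig : ∀ i : Fin n, (lap A).mulVec (u i) = lam i • u i)
    (V : Fin q → Finset (Fin n))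
    (hne : ∀ j, (V j).Nonempty)
    (hdisj : ∀ j j' : Fin q, j ≠ j' → Disjoint (V j) (V j'))
    (hcover : ∀ i : Fin n, ∃ j : Fin q, i ∈ V j)
    (hlamq : 0 < lam ⟨q, hqn⟩)
    (α : ℝ) (hα0 : 0 ≤ α)
    (hreal : avgrelout A V ≤ α * lam ⟨q, hqn⟩ / Real.sqrt (2 * q))
    (M Mbar : Matrix (Fin n) (Fin n) ℝ)
    (hM : ∀ a b, M a b = ∑ l ∈ Finset.univ.filter (fun l : Fin n => (l : ℕ) < q),
      u l a * u l b)
    (hMbar : ∀ a b, Mbar a b = ∑ j : Fin q, ubar V j a * ubar V j b) :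
    (∑ a, ∑ b, (M a b - Mbar a b) ^ 2) ≤ 2 * α ^ 2 := by
  classical
  set S : Finset (Fin n) := Finset.univ.filter (fun l : Fin n => (l : ℕ) < q) with hS
  set T : Finset (Fin n) := Finset.univ.filter (fun l : Fin n => ¬ (l : ℕ) < q) with hT
  set c : Fin q → Fin n → ℝ := fun j i => ∑ a, ubar V j a * u i a with hcdef
  set lq : ℝ := lam ⟨q, hqn⟩ with hlqdef
  have hcomp := aux_complete u horth
  have hub := aux_ubar_orth V hne hdisj
  have hScard : S.card = q := aux_filter_card hqn
  have hite_sq : ∀ (p : Prop) [Decidable p], (if p then (1:ℝ) else 0) ^ 2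
      = if p then (1:ℝ) else 0 := by
    intro p _; split <;> norm_num
  -- E1 : ∑∑ M*M = q
  have hE1 : ∑ a, ∑ b, M a b * M a b = (q : ℝ) := by
    calc ∑ a, ∑ b, M a b * M a b
        = ∑ i ∈ S, ∑ i' ∈ S, (∑ a, u i a * u i' a) ^ 2 := by
          simp only [hM, ← hS]
          exact aux_expand_sum S S u u
      _ = ∑ i ∈ S, ∑ i' ∈ S, if i = i' then (1:ℝ) else 0 := by
          refine Finset.sum_congr rfl fun i _ => Finset.sum_congr rfl fun i' _ => ?_
          rw [horth i i', hite_sq]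
      _ = (q : ℝ) := by
          rw [Finset.sum_congr rfl fun i hi => Finset.sum_ite_eq S i (fun _ => (1:ℝ))]
          rw [Finset.sum_congr rfl fun i hi => if_pos hi, Finset.sum_const, hScard,
            nsmul_eq_mul, mul_one]
  -- E3 : ∑∑ Mbar*Mbar = q
  have hE3 : ∑ a, ∑ b, Mbar a b * Mbar a b = (q : ℝ) := by
    calc ∑ a, ∑ b, Mbar a b * Mbar a b
        = ∑ j : Fin q, ∑ j' : Fin q, (∑ a, ubar V j a * ubar V j' a) ^ 2 := by
          simp only [hMbar]
          exact aux_expand_sum Finset.univ Finset.univ (ubar V) (ubar V)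
      _ = ∑ j : Fin q, ∑ j' : Fin q, if j = j' then (1:ℝ) else 0 := by
          refine Finset.sum_congr rfl fun j _ => Finset.sum_congr rfl fun j' _ => ?_
          rw [hub j j', hite_sq]
      _ = (q : ℝ) := by
          simp [Finset.sum_ite_eq]
  -- E2 : ∑∑ M*Mbar = ∑ j ∑ i∈S (c j i)^2
  have hE2 : ∑ a, ∑ b, M a b * Mbar a b = ∑ j : Fin q, ∑ i ∈ S, c j i ^ 2 := by
    calc ∑ a, ∑ b, M a b * Mbar a b
        = ∑ i ∈ S, ∑ j : Fin q, (∑ a, u i a * ubar V j a) ^ 2 := by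
          simp only [hM, hMbar, ← hS]
          exact aux_expand_sum S Finset.univ u (ubar V)
      _ = ∑ j : Fin q, ∑ i ∈ S, (∑ a, u i a * ubar V j a) ^ 2 := Finset.sum_comm
      _ = ∑ j : Fin q, ∑ i ∈ S, c j i ^ 2 := by
          refine Finset.sum_congr rfl fun j _ => Finset.sum_congr rfl fun i _ => ?_
          rw [hcdef]
          congr 1
          exact Finset.sum_congr rfl fun a _ => mul_comm _ _
  -- Parseval : ∑ i (c j i)^2 = 1
  have hps1 : ∀ j : Fin q, ∑ i, c j i ^ 2 = 1 := by
    intro j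
    rw [show (∑ i, c j i ^ 2) = ∑ i, (∑ a, ubar V j a * u i a) ^ 2 from rfl,
      aux_parseval u hcomp (ubar V j)]
    have := hub j j
    rw [if_pos rfl] at this
    rw [← this]
    exact Finset.sum_congr rfl fun a _ => sq (ubar V j a)
  have hsplit : ∀ j : Fin q, ∑ i ∈ S, c j i ^ 2 + ∑ i ∈ T, c j i ^ 2 = 1 := by
    intro j
    rw [hS, hT, Finset.sum_filter_add_sum_filter_not]
    exact hps1 j
  -- main identity
  have hLHS : (∑ a, ∑ b, (M a b - Mbar a b) ^ 2)
      = 2 * ∑ j : Fin q, ∑ i ∈ T, c j i ^ 2 := by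
    have expand : ∀ a b : Fin n, (M a b - Mbar a b) ^ 2
        = M a b * M a b - 2 * (M a b * Mbar a b) + Mbar a b * Mbar a b := by
      intro a b; ring
    have step : (∑ a, ∑ b, (M a b - Mbar a b) ^ 2)
        = (∑ a, ∑ b, M a b * M a b) - 2 * (∑ a, ∑ b, M a b * Mbar a b)
          + (∑ a, ∑ b, Mbar a b * Mbar a b) := by
      simp only [expand, Finset.sum_add_distrib, Finset.sum_sub_distrib,
        ← Finset.mul_sum]
    rw [step, hE1, hE2, hE3]
    have hsum1 : ∑ j : Fin q, ∑ i ∈ S, c j i ^ 2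
        = (q : ℝ) - ∑ j : Fin q, ∑ i ∈ T, c j i ^ 2 := by
      have h : ∑ j : Fin q, (∑ i ∈ S, c j i ^ 2 + ∑ i ∈ T, c j i ^ 2) = (q : ℝ) := by
        rw [Finset.sum_congr rfl fun j _ => hsplit j, Finset.sum_const,
          Finset.card_univ, Fintype.card_fin, nsmul_eq_mul, mul_one]
      rw [Finset.sum_add_distrib] at h
      linarith
    rw [hsum1]; ring
  -- key bound per part
  have key : ∀ j : Fin q, lq ^ 2 * ∑ i ∈ T, c j i ^ 2 ≤ 2 * relout A V j ^ 2 := by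
    intro j
    have hLc : ∀ i : Fin n, ∑ a, (lap A).mulVec (ubar V j) a * u i a = lam i * c j i := by
      intro i
      rw [aux_lapadj A hsymm (ubar V j) (u i), heig i]
      rw [hcdef]
      simp only [Pi.smul_apply, smul_eq_mul]
      rw [Finset.mul_sum]
      exact Finset.sum_congr rfl fun a _ => by ring
    have hps2 : ∑ i, (lam i * c j i) ^ 2 = ∑ a, ((lap A).mulVec (ubar V j) a) ^ 2 := by
      rw [← aux_parseval u hcomp ((lap A).mulVec (ubar V j))]
      exact Finset.sum_congr rfl fun i _ => by rw [hLc i]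
    calc lq ^ 2 * ∑ i ∈ T, c j i ^ 2 = ∑ i ∈ T, lq ^ 2 * c j i ^ 2 :=
          Finset.mul_sum _ _ _
      _ ≤ ∑ i ∈ T, (lam i * c j i) ^ 2 := by
          refine Finset.sum_le_sum fun i hi => ?_
          have hqi : (⟨q, hqn⟩ : Fin n) ≤ i := by
            rw [hT, Finset.mem_filter] at hi
            exact Nat.le_of_not_lt hi.2
          have h1 : lq ≤ lam i := hmono hqi
          have h2 : lq ^ 2 ≤ lam i ^ 2 := by nlinarith [hlamq]
          rw [mul_pow]
          nlinarith [sq_nonneg (c j i), h2]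
      _ ≤ ∑ i, (lam i * c j i) ^ 2 :=
          Finset.sum_le_sum_of_subset_of_nonneg (Finset.subset_univ T)
            (fun i _ _ => sq_nonneg _)
      _ = ∑ a, ((lap A).mulVec (ubar V j) a) ^ 2 := hps2
      _ ≤ 2 * relout A V j ^ 2 := aux_lap_ubar_norm A hsymm hnonneg V j
  -- bound on total relout from α-realizability
  have hq0 : (0:ℝ) < (q : ℝ) := by exact_mod_cast hq1
  have h2q : (0:ℝ) < 2 * (q : ℝ) := by linarith
  have hsum_relout : ∑ j : Fin q, relout A V j ^ 2 ≤ α ^ 2 * lq ^ 2 / 2 := by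
    have hX : (0:ℝ) ≤ (1 / (q:ℝ)) * ∑ j : Fin q, relout A V j ^ 2 := by
      have : (0:ℝ) ≤ ∑ j : Fin q, relout A V j ^ 2 :=
        Finset.sum_nonneg fun j _ => sq_nonneg _
      positivity
    have hsq : (1 / (q:ℝ)) * ∑ j : Fin q, relout A V j ^ 2
        ≤ (α * lq / Real.sqrt (2 * q)) ^ 2 := by
      have h1 := pow_le_pow_left₀ (Real.sqrt_nonneg _) hreal 2
      rwa [Real.sq_sqrt hX] at h1
    have hrs : (α * lq / Real.sqrt (2 * q)) ^ 2 = α ^ 2 * lq ^ 2 / (2 * q) := by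
      rw [div_pow, mul_pow, Real.sq_sqrt h2q.le]
    rw [hrs] at hsq
    have := mul_le_mul_of_nonneg_left hsq hq0.le
    calc ∑ j : Fin q, relout A V j ^ 2
        = (q:ℝ) * ((1 / (q:ℝ)) * ∑ j : Fin q, relout A V j ^ 2) := by
          field_simp
      _ ≤ (q:ℝ) * (α ^ 2 * lq ^ 2 / (2 * (q:ℝ))) := this
      _ = α ^ 2 * lq ^ 2 / 2 := by field_simp
  -- assemble
  have hSig : lq ^ 2 * (∑ j : Fin q, ∑ i ∈ T, c j i ^ 2) ≤ α ^ 2 * lq ^ 2 := by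
    calc lq ^ 2 * (∑ j : Fin q, ∑ i ∈ T, c j i ^ 2)
        = ∑ j : Fin q, lq ^ 2 * ∑ i ∈ T, c j i ^ 2 := Finset.mul_sum _ _ _
      _ ≤ ∑ j : Fin q, 2 * relout A V j ^ 2 := Finset.sum_le_sum fun j _ => key j
      _ = 2 * ∑ j : Fin q, relout A V j ^ 2 := (Finset.mul_sum _ _ _).symm
      _ ≤ 2 * (α ^ 2 * lq ^ 2 / 2) := by linarith
      _ = α ^ 2 * lq ^ 2 := by ring
  rw [hLHS]
  have hlq2 : (0:ℝ) < lq ^ 2 := by positivity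
  have hfin : ∑ j : Fin q, ∑ i ∈ T, c j i ^ 2 ≤ α ^ 2 := by
    nlinarith [hSig, hlq2]
  linarith
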